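/- Define μ on odd positive integers by μ(1) = 1, μ(p) = p(p-1) for odd primes p, μ(p^n) = μ(p^{n-1})(p^{⌊n/2⌋+1} - 1) for n ≥ 2, extended multiplicatively to all odd positive integers. Then for all odd positive integers q₁, q₂ with q₁ ∣ q₂, the integer μ(q₁) divides μ(q₂). -/

import Mathlib

private lemma odd_of_dvd {d n : ℕ} (hn : Odd n) (h : d ∣ n) : Odd d := by
  rcases Nat.even_or_odd d with he | ho
  · exact absurd ((even_iff_two_dvd.mp he).trans h |> even_iff_two_dvd.mpr)
      (Nat.not_even_iff_odd.mpr hn)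
  · exact ho

/-- For the multiplicative function `μ` on odd positive integers,
`q₁ ∣ q₂` implies `μ q₁ ∣ μ q₂`. -/
theorem mu_dvd_of_dvd
    (μ : ℕ → ℕ) (h1 : μ 1 = 1)
    (hprime : ∀ p : ℕ, p.Prime → Odd p → μ p = p * (p - 1))
    (hpow : ∀ p : ℕ, p.Prime → Odd p → ∀ n : ℕ, 2 ≤ n →
      μ (p ^ n) = μ (p ^ (n - 1)) * (p ^ (n / 2 + 1) - 1))
    (hmul : ∀ a b : ℕ, 0 < a → 0 < b → Odd a → Odd b → Nat.Coprime a b →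
      μ (a * b) = μ a * μ b) :
    ∀ q₁ q₂ : ℕ, 0 < q₁ → 0 < q₂ → Odd q₁ → Odd q₂ → q₁ ∣ q₂ →
      μ q₁ ∣ μ q₂ := by
  -- prime power divisibility
  have key : ∀ p : ℕ, p.Prime → Odd p → ∀ m n : ℕ, m ≤ n → μ (p ^ m) ∣ μ (p ^ n) := by
    intro p hp hop m n hmn
    induction n with
    | zero => simpa using (Nat.le_zero.mp hmn ▸ dvd_refl _)
    | succ n ih =>
      rcases Nat.lt_or_ge m (n+1) with h | h
      · have hd : μ (p ^ n) ∣ μ (p ^ (n+1)) := by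
          rcases Nat.eq_zero_or_pos n with rfl | hn
          · simp [h1]
          · have := hpow p hp hop (n+1) (by omega)
            simp only [Nat.add_sub_cancel] at this
            rw [this]; exact dvd_mul_right _ _
        exact (ih (by omega)).trans hd
      · have : m = n + 1 := le_antisymm hmn h
        subst this; exact dvd_rfl
  intro q₁
  induction q₁ using Nat.strong_induction_on with
  | _ q₁ IH =>
    intro q₂ hq₁ hq₂ ho₁ ho₂ hdvd
    rcases eq_or_ne q₁ 1 with rfl | hne
    · rw [h1]; exact one_dvd _
    · obtain ⟨p, hp, hpd⟩ := Nat.exists_prime_and_dvd hne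
      have hop : Odd p := odd_of_dvd ho₁ hpd
      have hq₁0 : q₁ ≠ 0 := hq₁.ne'
      have hq₂0 : q₂ ≠ 0 := hq₂.ne'
      set k := q₁.factorization p with hk
      set l := q₂.factorization p with hl
      have hkl : k ≤ l := (Nat.factorization_le_iff_dvd hq₁0 hq₂0 |>.2 hdvd) p
      have hsplit1 : p ^ k * (q₁ / p ^ k) = q₁ := Nat.ordProj_mul_ordCompl_eq_self q₁ p
      have hsplit2 : p ^ l * (q₂ / p ^ l) = q₂ := Nat.ordProj_mul_ordCompl_eq_self q₂ p
      have hc1dvd : q₁ / p ^ k ∣ q₁ := Nat.ordCompl_dvd q₁ p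
      have hc2dvd : q₂ / p ^ l ∣ q₂ := Nat.ordCompl_dvd q₂ p
      have hc1pos : 0 < q₁ / p ^ k := Nat.ordCompl_pos p hq₁0
      have hc2pos : 0 < q₂ / p ^ l := Nat.ordCompl_pos p hq₂0
      have hoc1 : Odd (q₁ / p ^ k) := odd_of_dvd ho₁ hc1dvd
      have hoc2 : Odd (q₂ / p ^ l) := odd_of_dvd ho₂ hc2dvd
      have hco1 : Nat.Coprime (p ^ k) (q₁ / p ^ k) :=
        Nat.Coprime.pow_left _ (Nat.coprime_ordCompl hp hq₁0)
      have hco2 : Nat.Coprime (p ^ l) (q₂ / p ^ l) :=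
        Nat.Coprime.pow_left _ (Nat.coprime_ordCompl hp hq₂0)
      have hm1 : μ q₁ = μ (p ^ k) * μ (q₁ / p ^ k) := by
        conv_lhs => rw [← hsplit1]
        exact hmul _ _ (pow_pos hp.pos _) hc1pos (hop.pow) hoc1 hco1
      have hm2 : μ q₂ = μ (p ^ l) * μ (q₂ / p ^ l) := by
        conv_lhs => rw [← hsplit2]
        exact hmul _ _ (pow_pos hp.pos _) hc2pos (hop.pow) hoc2 hco2
      have hkpos : 1 ≤ k := (Nat.Prime.dvd_iff_one_le_factorization hp hq₁0).1 hpd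
      have hlt : q₁ / p ^ k < q₁ := by
        apply Nat.div_lt_self hq₁
        calc 1 < p := hp.one_lt
        _ ≤ p ^ k := Nat.le_self_pow (by omega) p
      have hccdvd : q₁ / p ^ k ∣ q₂ / p ^ l :=
        Nat.ordCompl_dvd_ordCompl_of_dvd hdvd p
      rw [hm1, hm2]
      exact mul_dvd_mul (key p hp hop k l hkl)
        (IH _ hlt _ hc1pos hc2pos hoc1 hoc2 hccdvd)
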